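/- Let Ω ⊆ ℝ^N be a measurable set with 0 < |Ω| < ∞, let A, B, p, q be positive real constants, and let u : Ω → ℝ be measurable with e^{pu} and e^{-qu} integrable on Ω and satisfying the inverse Hölder bound ‖e^{u}‖_{L^p(Ω)} · ‖e^{-u}‖_{L^q(Ω)} ≤ |Ω|^{1/p + 1/q} (B/A)^{1/q}. Define w(x) := A e^{p u(x)} / (|Ω|⁻¹ ∫_Ω e^{p u(y)} dy) − B e^{-q u(x)} / (|Ω|⁻¹ ∫_Ω e^{-q u(y)} dy). If x₀ ∈ Ω satisfies u(x) ≤ u(x₀) for all x ∈ Ω, then for every x ∈ Ω one has w(x₀) − w(x) ≥ A (p+q) (q/p)^{(p−q)/(p+q)} (u(x₀) − u(x)). -/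

import Mathlib

open Real MeasureTheory Set Filter Topology

noncomputable section

/-- The non-local nonlinearity
`w(x) = A e^{pu(x)} / (|Ω|⁻¹ ∫_Ω e^{pu}) − B e^{-qu(x)} / (|Ω|⁻¹ ∫_Ω e^{-qu})`. -/
def nonlocalW (N : ℕ) (A B p q : ℝ) (Ω : Set (EuclideanSpace ℝ (Fin N)))
    (u : EuclideanSpace ℝ (Fin N) → ℝ) (x : EuclideanSpace ℝ (Fin N)) : ℝ :=
  A * Real.exp (p * u x) / ((volume Ω).toReal⁻¹ * ∫ y in Ω, Real.exp (p * u y))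
    - B * Real.exp (-q * u x) / ((volume Ω).toReal⁻¹ * ∫ y in Ω, Real.exp (-q * u y))



/-- Pointwise weighted AM–GM for the derivative of the comparison function. -/
lemma amgm_aux {a b p q : ℝ} (ha : 0 < a) (hb : 0 < b) (hp : 0 < p) (hq : 0 < q) (τ : ℝ) :
    (p + q) * (q / p) ^ ((p - q) / (p + q)) * (a ^ (q / (p + q)) * b ^ (p / (p + q)))
      ≤ a * p * Real.exp (p * τ) + b * q * Real.exp (-q * τ) := by
  have hpq : (0:ℝ) < p + q := by linarith
  set lam : ℝ := q / (p + q) with hlam_def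
  set mu : ℝ := p / (p + q) with hmu_def
  have hlam : 0 < lam := div_pos hq hpq
  have hmu : 0 < mu := div_pos hp hpq
  have hsum : lam + mu = 1 := by rw [hlam_def, hmu_def]; field_simp; ring
  set P1 : ℝ := a * p * Real.exp (p * τ) / lam with hP1_def
  set P2 : ℝ := b * q * Real.exp (-q * τ) / mu with hP2_def
  have hP1 : 0 < P1 := by positivity
  have hP2 : 0 < P2 := by positivity
  have h := Real.geom_mean_le_arith_mean2_weighted hlam.le hmu.le hP1.le hP2.le hsum
  have hr : lam * P1 + mu * P2 = a * p * Real.exp (p * τ) + b * q * Real.exp (-q * τ) := by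
    rw [hP1_def, hP2_def]; field_simp
  have heq : (p + q) * (q / p) ^ ((p - q) / (p + q)) * (a ^ lam * b ^ mu)
      = P1 ^ lam * P2 ^ mu := by
    have e1 : Real.log ((p + q) * (q / p) ^ ((p - q) / (p + q)) * (a ^ lam * b ^ mu))
        = Real.log (p + q) + (p - q) / (p + q) * (Real.log q - Real.log p)
          + (lam * Real.log a + mu * Real.log b) := by
      rw [Real.log_mul (by positivity) (by positivity),
        Real.log_mul (by positivity) (by positivity),
        Real.log_mul (by positivity) (by positivity),
        Real.log_rpow (by positivity), Real.log_rpow ha, Real.log_rpow hb,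
        Real.log_div hq.ne' hp.ne']
    have e2 : Real.log (P1 ^ lam * P2 ^ mu)
        = lam * (Real.log a + Real.log p + p * τ - (Real.log q - Real.log (p + q)))
          + mu * (Real.log b + Real.log q + (-q * τ) - (Real.log p - Real.log (p + q))) := by
      rw [Real.log_mul (by positivity) (by positivity),
        Real.log_rpow hP1, Real.log_rpow hP2, hP1_def, hP2_def,
        Real.log_div (by positivity) hlam.ne', Real.log_div (by positivity) hmu.ne',
        Real.log_mul (by positivity) (Real.exp_pos _).ne',
        Real.log_mul (by positivity) (Real.exp_pos _).ne',
        Real.log_mul ha.ne' hp.ne', Real.log_mul hb.ne' hq.ne',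
        Real.log_exp, Real.log_exp, hlam_def, hmu_def,
        Real.log_div hq.ne' hpq.ne', Real.log_div hp.ne' hpq.ne']
    have hlog : Real.log ((p + q) * (q / p) ^ ((p - q) / (p + q)) * (a ^ lam * b ^ mu))
        = Real.log (P1 ^ lam * P2 ^ mu) := by
      rw [e1, e2, hlam_def, hmu_def]
      field_simp
      ring
    calc (p + q) * (q / p) ^ ((p - q) / (p + q)) * (a ^ lam * b ^ mu)
        = Real.exp (Real.log ((p + q) * (q / p) ^ ((p - q) / (p + q)) * (a ^ lam * b ^ mu))) := by
          rw [Real.exp_log (by positivity)]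
      _ = Real.exp (Real.log (P1 ^ lam * P2 ^ mu)) := by rw [hlog]
      _ = P1 ^ lam * P2 ^ mu := by rw [Real.exp_log (by positivity)]
  rw [heq]
  calc P1 ^ lam * P2 ^ mu ≤ lam * P1 + mu * P2 := h
    _ = _ := hr

/-- Monotonicity of the comparison function. -/
lemma mono_aux {a b c p q : ℝ} (hc : ∀ τ : ℝ, c ≤ a * p * Real.exp (p * τ) + b * q * Real.exp (-q * τ)) :
    Monotone (fun τ : ℝ => a * Real.exp (p * τ) - b * Real.exp (-q * τ) - c * τ) := by
  have hder : ∀ τ : ℝ, HasDerivAt (fun τ : ℝ => a * Real.exp (p * τ) - b * Real.exp (-q * τ) - c * τ)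
      (a * p * Real.exp (p * τ) + b * q * Real.exp (-q * τ) - c) τ := by
    intro τ
    have h1 : HasDerivAt (fun τ : ℝ => p * τ) p τ := by
      simpa using (hasDerivAt_id τ).const_mul p
    have h2 : HasDerivAt (fun τ : ℝ => -q * τ) (-q) τ := by
      simpa using (hasDerivAt_id τ).const_mul (-q)
    have h3 : HasDerivAt (fun τ : ℝ => c * τ) c τ := by
      simpa using (hasDerivAt_id τ).const_mul c
    have := ((h1.exp.const_mul a).sub (h2.exp.const_mul b)).sub h3
    exact this.congr_deriv (by ring)
  apply monotone_of_deriv_nonneg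
  · exact fun τ => (hder τ).differentiableAt
  · intro τ
    rw [(hder τ).deriv]
    linarith [hc τ]

/-- A pointwise comparison inequality for the non-local nonlinearity `w` under the
inverse Hölder bound `‖e^u‖_{L^p(Ω)} ‖e^{-u}‖_{L^q(Ω)} ≤ |Ω|^{1/p+1/q} (B/A)^{1/q}`:
if `u` attains its supremum over `Ω` at `x₀ ∈ Ω`, then for every `x ∈ Ω`,
`w(x₀) − w(x) ≥ A(p+q)(q/p)^{(p−q)/(p+q)} (u(x₀) − u(x))`. -/
theorem stmt1 {N : ℕ} (Ω : Set (EuclideanSpace ℝ (Fin N))) (hΩm : MeasurableSet Ω)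
    (hΩpos : 0 < volume Ω) (hΩfin : volume Ω ≠ ⊤)
    (A B p q : ℝ) (hA : 0 < A) (hB : 0 < B) (hp : 0 < p) (hq : 0 < q)
    (u : EuclideanSpace ℝ (Fin N) → ℝ)
    (hu_meas : AEMeasurable u (volume.restrict Ω))
    (hint_p : IntegrableOn (fun y => Real.exp (p * u y)) Ω)
    (hint_q : IntegrableOn (fun y => Real.exp (-q * u y)) Ω)
    (hholder :
      (∫ y in Ω, Real.exp (p * u y)) ^ (1 / p) * (∫ y in Ω, Real.exp (-q * u y)) ^ (1 / q)
        ≤ (volume Ω).toReal ^ (1 / p + 1 / q) * (B / A) ^ (1 / q))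
    (x₀ : EuclideanSpace ℝ (Fin N)) (hx₀ : x₀ ∈ Ω)
    (hmax : ∀ x ∈ Ω, u x ≤ u x₀) :
    ∀ x ∈ Ω,
      A * (p + q) * (q / p) ^ ((p - q) / (p + q)) * (u x₀ - u x)
        ≤ nonlocalW N A B p q Ω u x₀ - nonlocalW N A B p q Ω u x := by
  intro x hx
  have hpq : (0:ℝ) < p + q := by linarith
  have hV : 0 < (volume Ω).toReal := ENNReal.toReal_pos hΩpos.ne' hΩfin
  have hIp : 0 < ∫ y in Ω, Real.exp (p * u y) := by
    refine (setIntegral_pos_iff_support_of_nonneg_ae ?_ hint_p).2 ?_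
    · filter_upwards with y using (Real.exp_pos _).le
    · have hsupp : Function.support (fun y : EuclideanSpace ℝ (Fin N) => Real.exp (p * u y)) = Set.univ := by
        ext y; simp [Real.exp_ne_zero]
      rw [hsupp, Set.univ_inter]; exact hΩpos
  have hIq : 0 < ∫ y in Ω, Real.exp (-q * u y) := by
    refine (setIntegral_pos_iff_support_of_nonneg_ae ?_ hint_q).2 ?_
    · filter_upwards with y using (Real.exp_pos _).le
    · have hsupp : Function.support (fun y : EuclideanSpace ℝ (Fin N) => Real.exp (-q * u y)) = Set.univ := by
        ext y; simp [Real.exp_ne_zero]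
      rw [hsupp, Set.univ_inter]; exact hΩpos
  set V := (volume Ω).toReal with hVdef
  set Ip := ∫ y in Ω, Real.exp (p * u y) with hIpdef
  set Iq := ∫ y in Ω, Real.exp (-q * u y) with hIqdef
  set a := A * V / Ip with hadef
  set b := B * V / Iq with hbdef
  have ha : 0 < a := div_pos (mul_pos hA hV) hIp
  have hb : 0 < b := div_pos (mul_pos hB hV) hIq
  -- key inequality `A ≤ a^(q/(p+q)) * b^(p/(p+q))` from the inverse Hölder bound
  have key : A ≤ a ^ (q / (p + q)) * b ^ (p / (p + q)) := by
    have h0 : Real.log (Ip ^ (1 / p) * Iq ^ (1 / q))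
        ≤ Real.log (V ^ (1 / p + 1 / q) * (B / A) ^ (1 / q)) :=
      (Real.log_le_log_iff (by positivity) (by positivity)).2 hholder
    rw [Real.log_mul (by positivity) (by positivity),
      Real.log_mul (by positivity) (by positivity),
      Real.log_rpow hIp, Real.log_rpow hIq, Real.log_rpow hV,
      Real.log_rpow (div_pos hB hA), Real.log_div hB.ne' hA.ne'] at h0
    have hr : (0:ℝ) < p * q / (p + q) := by positivity
    have hL2 := mul_le_mul_of_nonneg_left h0 hr.le
    have keylog : q / (p + q) * Real.log Ip + p / (p + q) * Real.log Iq
        ≤ Real.log V + p / (p + q) * (Real.log B - Real.log A) := by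
      calc q / (p + q) * Real.log Ip + p / (p + q) * Real.log Iq
          = p * q / (p + q) * (1 / p * Real.log Ip + 1 / q * Real.log Iq) := by
            field_simp
        _ ≤ p * q / (p + q) * ((1 / p + 1 / q) * Real.log V
              + 1 / q * (Real.log B - Real.log A)) := hL2
        _ = Real.log V + p / (p + q) * (Real.log B - Real.log A) := by
            field_simp; ring
    have hla : Real.log a = Real.log A + Real.log V - Real.log Ip := by
      rw [hadef, Real.log_div (by positivity) hIp.ne', Real.log_mul hA.ne' hV.ne']
    have hlb : Real.log b = Real.log B + Real.log V - Real.log Iq := by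
      rw [hbdef, Real.log_div (by positivity) hIq.ne', Real.log_mul hB.ne' hV.ne']
    have hsum : q / (p + q) + p / (p + q) = 1 := by field_simp; ring
    have h2 : q / (p + q) * Real.log A + p / (p + q) * Real.log A = Real.log A := by
      rw [← add_mul, hsum, one_mul]
    have hle : Real.log A ≤ q / (p + q) * Real.log a + p / (p + q) * Real.log b := by
      rw [hla, hlb]
      have h3 : q / (p + q) * Real.log V + p / (p + q) * Real.log V = Real.log V := by
        rw [← add_mul, hsum, one_mul]
      linarith [keylog, h2, h3]
    calc A = Real.exp (Real.log A) := (Real.exp_log hA).symm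
      _ ≤ Real.exp (q / (p + q) * Real.log a + p / (p + q) * Real.log b) :=
          Real.exp_le_exp.2 hle
      _ = a ^ (q / (p + q)) * b ^ (p / (p + q)) := by
          rw [mul_comm (q / (p + q)) (Real.log a), mul_comm (p / (p + q)) (Real.log b),
            Real.exp_add, ← Real.rpow_def_of_pos ha, ← Real.rpow_def_of_pos hb]
  -- pointwise derivative bound
  have hc : ∀ τ : ℝ, A * (p + q) * (q / p) ^ ((p - q) / (p + q))
      ≤ a * p * Real.exp (p * τ) + b * q * Real.exp (-q * τ) := by
    intro τ
    have h1 := amgm_aux ha hb hp hq τ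
    have hpos : (0:ℝ) ≤ (p + q) * (q / p) ^ ((p - q) / (p + q)) := by positivity
    calc A * (p + q) * (q / p) ^ ((p - q) / (p + q))
        = (p + q) * (q / p) ^ ((p - q) / (p + q)) * A := by ring
      _ ≤ (p + q) * (q / p) ^ ((p - q) / (p + q))
            * (a ^ (q / (p + q)) * b ^ (p / (p + q))) := by
          exact mul_le_mul_of_nonneg_left key hpos
      _ ≤ a * p * Real.exp (p * τ) + b * q * Real.exp (-q * τ) := h1
  have hmono := mono_aux (a := a) (b := b) (p := p) (q := q)
    (c := A * (p + q) * (q / p) ^ ((p - q) / (p + q))) hc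
  have hts : u x ≤ u x₀ := hmax x hx
  have hmle := hmono hts
  simp only at hmle
  have hw : ∀ z, nonlocalW N A B p q Ω u z
      = a * Real.exp (p * u z) - b * Real.exp (-q * u z) := by
    intro z
    simp only [nonlocalW, ← hVdef, ← hIpdef, ← hIqdef, hadef, hbdef]
    field_simp
  rw [hw, hw]
  linarith [hmle]
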